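/- Let U and Ũ be n×k real matrices each with orthonormal columns. Then there exists a k×k orthogonal matrix O such that ‖Ũ - U O‖ ≤ 2‖(I - U Uᵀ) Ũ‖, where ‖·‖ is the spectral norm. -/

import Mathlib

open Matrix

/-- The spectral (ℓ²-operator) norm of a rectangular real matrix. -/
noncomputable def specNorm {m n : ℕ} (A : Matrix (Fin m) (Fin n) ℝ) : ℝ :=
  ‖LinearMap.toContinuousLinearMap (Matrix.toEuclideanLin A)‖

open scoped Matrix.Norms.L2Operator RealInnerProductSpace

open scoped MatrixOrder in
noncomputable def Matrix.PosSemidef.sqrt {k : ℕ} {A : Matrix (Fin k) (Fin k) ℝ}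
    (_ : A.PosSemidef) : Matrix (Fin k) (Fin k) ℝ :=
  CFC.sqrt A

open scoped MatrixOrder in
lemma Matrix.PosSemidef.posSemidef_sqrt {k : ℕ} {A : Matrix (Fin k) (Fin k) ℝ}
    (hA : A.PosSemidef) : hA.sqrt.PosSemidef :=
  (CFC.sqrt_nonneg A).posSemidef

open scoped MatrixOrder in
lemma Matrix.PosSemidef.sqrt_mul_self {k : ℕ} {A : Matrix (Fin k) (Fin k) ℝ}
    (hA : A.PosSemidef) : hA.sqrt * hA.sqrt = A :=
  CFC.sqrt_mul_sqrt_self A hA.nonneg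

namespace SpecAux

lemma specNorm_eq {m n : ℕ} (A : Matrix (Fin m) (Fin n) ℝ) : specNorm A = ‖A‖ := rfl

lemma tel_apply_le {m n : ℕ} (A : Matrix (Fin m) (Fin n) ℝ) (x : EuclideanSpace ℝ (Fin n)) :
    ‖toEuclideanLin A x‖ ≤ ‖A‖ * ‖x‖ :=
  ((toEuclideanLin.trans LinearMap.toContinuousLinearMap) A).le_opNorm x

lemma norm_le_bound {m n : ℕ} (A : Matrix (Fin m) (Fin n) ℝ) {c : ℝ} (hc : 0 ≤ c)
    (h : ∀ x : EuclideanSpace ℝ (Fin n), ‖toEuclideanLin A x‖ ≤ c * ‖x‖) : ‖A‖ ≤ c :=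
  ContinuousLinearMap.opNorm_le_bound _ hc h

lemma dot_aux {m n : ℕ} (A : Matrix (Fin m) (Fin n) ℝ) (a : Fin n → ℝ) (b : Fin m → ℝ) :
    dotProduct a (Aᵀ *ᵥ b) = dotProduct (A *ᵥ a) b := by
  rw [dotProduct_mulVec, vecMul_transpose]

lemma inner_tel {m n : ℕ} (A : Matrix (Fin m) (Fin n) ℝ) (x : EuclideanSpace ℝ (Fin m))
    (y : EuclideanSpace ℝ (Fin n)) :
    ⟪x, toEuclideanLin A y⟫ = dotProduct (WithLp.equiv 2 _ x) (A *ᵥ (WithLp.equiv 2 _ y)) := by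
  rw [EuclideanSpace.inner_eq_star_dotProduct]
  simp [dotProduct_comm]

lemma dot_self_eq {m : ℕ} (y : EuclideanSpace ℝ (Fin m)) :
    dotProduct (WithLp.equiv 2 _ y) (WithLp.equiv 2 _ y) = ‖y‖ ^ 2 := by
  rw [← real_inner_self_eq_norm_sq, EuclideanSpace.inner_eq_star_dotProduct]
  simp

lemma norm_tel_sq {m n : ℕ} (A : Matrix (Fin m) (Fin n) ℝ) (y : EuclideanSpace ℝ (Fin n)) :
    ‖toEuclideanLin A y‖ ^ 2
      = dotProduct (WithLp.equiv 2 _ y) ((Aᵀ * A) *ᵥ (WithLp.equiv 2 _ y)) := by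
  rw [← real_inner_self_eq_norm_sq, inner_tel, ← mulVec_mulVec, dot_aux]
  simp

lemma tel_mul {a b c : ℕ} (A : Matrix (Fin a) (Fin b) ℝ) (B : Matrix (Fin b) (Fin c) ℝ)
    (x : EuclideanSpace ℝ (Fin c)) :
    toEuclideanLin (A * B) x = toEuclideanLin A (toEuclideanLin B x) := by
  simp [Matrix.toEuclideanLin_apply, Matrix.mulVec_mulVec]

lemma norm_iso_mul_le {a b c : ℕ} {V : Matrix (Fin a) (Fin b) ℝ} (hV : Vᵀ * V = 1)
    (A : Matrix (Fin b) (Fin c) ℝ) : ‖V * A‖ ≤ ‖A‖ := by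
  apply norm_le_bound _ (norm_nonneg A)
  intro x
  rw [tel_mul]
  have hiso : ‖toEuclideanLin V (toEuclideanLin A x)‖ = ‖toEuclideanLin A x‖ := by
    rw [← Real.sqrt_sq (norm_nonneg (toEuclideanLin V (toEuclideanLin A x))),
      ← Real.sqrt_sq (norm_nonneg (toEuclideanLin A x))]
    congr 1
    rw [norm_tel_sq, hV, one_mulVec, dot_self_eq]
  rw [hiso]
  exact tel_apply_le A x

lemma norm_one_le {k : ℕ} : ‖(1 : Matrix (Fin k) (Fin k) ℝ)‖ ≤ 1 := by
  apply norm_le_bound _ zero_le_one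
  intro x
  have : toEuclideanLin (1 : Matrix (Fin k) (Fin k) ℝ) x = x := by
    simp [Matrix.toEuclideanLin_apply]
  rw [this, one_mul]

/-- PSD monotonicity of the operator norm. -/
lemma norm_le_of_psd {k : ℕ} {A B : Matrix (Fin k) (Fin k) ℝ}
    (hA : A.PosSemidef) (hB : B.PosSemidef) (hBA : (B - A).PosSemidef) : ‖A‖ ≤ ‖B‖ := by
  have key : ∀ (C : Matrix (Fin k) (Fin k) ℝ) (hC : C.PosSemidef)
      (y : EuclideanSpace ℝ (Fin k)),
      ‖toEuclideanLin hC.sqrt y‖ ^ 2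
        = dotProduct (WithLp.equiv 2 _ y) (C *ᵥ (WithLp.equiv 2 _ y)) := by
    intro C hC y
    rw [norm_tel_sq]
    congr 2
    rw [← conjTranspose_eq_transpose_of_trivial, hC.posSemidef_sqrt.1.eq, hC.sqrt_mul_self]
  have hsqrt_le : ‖hA.sqrt‖ ≤ ‖hB.sqrt‖ := by
    apply norm_le_bound _ (norm_nonneg _)
    intro y
    have h2 := key A hA y
    have h3 := key B hB y
    have h4 : dotProduct (WithLp.equiv 2 _ y) (A *ᵥ (WithLp.equiv 2 _ y))
        ≤ dotProduct (WithLp.equiv 2 _ y) (B *ᵥ (WithLp.equiv 2 _ y)) := by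
      have h0 := hBA.dotProduct_mulVec_nonneg (WithLp.equiv 2 _ y)
      simp only [star_trivial, sub_mulVec, dotProduct_sub] at h0
      linarith
    have h5 := tel_apply_le hB.sqrt y
    nlinarith [norm_nonneg (toEuclideanLin hA.sqrt y), norm_nonneg (toEuclideanLin hB.sqrt y),
      norm_nonneg hB.sqrt, norm_nonneg y]
  have hnA : ‖A‖ = ‖hA.sqrt‖ * ‖hA.sqrt‖ := by
    conv_lhs => rw [← hA.sqrt_mul_self]
    rw [show hA.sqrt * hA.sqrt = hA.sqrtᴴ * hA.sqrt by rw [hA.posSemidef_sqrt.1.eq]]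
    exact Matrix.l2_opNorm_conjTranspose_mul_self _
  have hnB : ‖B‖ = ‖hB.sqrt‖ * ‖hB.sqrt‖ := by
    conv_lhs => rw [← hB.sqrt_mul_self]
    rw [show hB.sqrt * hB.sqrt = hB.sqrtᴴ * hB.sqrt by rw [hB.posSemidef_sqrt.1.eq]]
    exact Matrix.l2_opNorm_conjTranspose_mul_self _
  rw [hnA, hnB]
  exact mul_le_mul hsqrt_le hsqrt_le (norm_nonneg _) (norm_nonneg _)

lemma psd_one_sub {k : ℕ} {S : Matrix (Fin k) (Fin k) ℝ} (hS : S.PosSemidef)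
    (h2 : (1 - S * S).PosSemidef) : (1 - S).PosSemidef := by
  refine Matrix.PosSemidef.of_dotProduct_mulVec_nonneg ?_ ?_
  · rw [Matrix.IsHermitian, conjTranspose_sub, conjTranspose_one, hS.1.eq]
  · intro x
    simp only [star_trivial, sub_mulVec, dotProduct_sub, one_mulVec]
    set x' : EuclideanSpace ℝ (Fin k) := (WithLp.equiv 2 _).symm x with hx'
    have hxx : x = WithLp.equiv 2 _ x' := rfl
    have e1 : dotProduct x (S *ᵥ x) = ⟪x', toEuclideanLin S x'⟫ := by
      rw [inner_tel, ← hxx]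
    have e2 : ‖toEuclideanLin S x'‖ ^ 2 = dotProduct x ((S * S) *ᵥ x) := by
      rw [norm_tel_sq, ← hxx]
      congr 2
      rw [← conjTranspose_eq_transpose_of_trivial, hS.1.eq]
    have e3 : dotProduct x ((S * S) *ᵥ x) ≤ dotProduct x x := by
      have h0 := h2.dotProduct_mulVec_nonneg x
      simp only [star_trivial, sub_mulVec, dotProduct_sub, one_mulVec] at h0
      linarith
    have e4 : dotProduct x x = ‖x'‖ ^ 2 := by rw [hxx, dot_self_eq]
    have e5 : ⟪x', toEuclideanLin S x'⟫ ≤ ‖x'‖ * ‖toEuclideanLin S x'‖ := real_inner_le_norm _ _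
    nlinarith [norm_nonneg x', norm_nonneg (toEuclideanLin S x')]

lemma psd_sub_sq {k : ℕ} {S : Matrix (Fin k) (Fin k) ℝ} (hS : S.PosSemidef)
    (h1 : (1 - S).PosSemidef) : (S - S * S).PosSemidef := by
  obtain ⟨T, hTh, hTT⟩ : ∃ T : Matrix (Fin k) (Fin k) ℝ, Tᴴ = T ∧ T * T = S :=
    ⟨hS.sqrt, hS.posSemidef_sqrt.1.eq, hS.sqrt_mul_self⟩
  have h := h1.mul_mul_conjTranspose_same T
  rw [hTh] at h
  have heq : T * (1 - S) * T = S - S * S := by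
    rw [mul_sub, mul_one, sub_mul, hTT, ← hTT]
    simp only [Matrix.mul_assoc]
  rwa [heq] at h

/-- Polar decomposition: `M = O * S` with `O` orthogonal and `S` the psd square root of `MᵀM`. -/
lemma polar {k : ℕ} (M : Matrix (Fin k) (Fin k) ℝ) :
    ∃ O S : Matrix (Fin k) (Fin k) ℝ,
      Oᵀ * O = 1 ∧ S.PosSemidef ∧ S * S = Mᵀ * M ∧ M = O * S := by
  have hH : (Mᵀ * M).PosSemidef := by
    have := Matrix.posSemidef_conjTranspose_mul_self M
    rwa [conjTranspose_eq_transpose_of_trivial] at this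
  set S := hH.sqrt with hSdef
  have hSps : S.PosSemidef := hH.posSemidef_sqrt
  have hSS : S * S = Mᵀ * M := hH.sqrt_mul_self
  have hnorm : ∀ x : EuclideanSpace ℝ (Fin k),
      ‖toEuclideanLin S x‖ = ‖toEuclideanLin M x‖ := by
    intro x
    rw [← Real.sqrt_sq (norm_nonneg (toEuclideanLin S x)),
      ← Real.sqrt_sq (norm_nonneg (toEuclideanLin M x))]
    congr 1
    rw [norm_tel_sq, norm_tel_sq]
    congr 2
    rw [show Sᵀ = S by rw [← conjTranspose_eq_transpose_of_trivial, hSps.1.eq], hSS]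
  set Sq := toEuclideanLin S with hSq
  set T := toEuclideanLin M with hT
  have hker : LinearMap.ker Sq ≤ LinearMap.ker T := by
    intro x hx
    rw [LinearMap.mem_ker] at hx ⊢
    have := hnorm x
    rw [hx, norm_zero] at this
    exact norm_eq_zero.mp this.symm
  set f0 : _ →ₗ[ℝ] EuclideanSpace ℝ (Fin k) := (LinearMap.ker Sq).liftQ T hker with hf0
  set g : LinearMap.range Sq →ₗ[ℝ] EuclideanSpace ℝ (Fin k) :=
    f0.comp (LinearMap.quotKerEquivRange Sq).symm.toLinearMap with hgdef
  have hg : ∀ x : EuclideanSpace ℝ (Fin k),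
      g ⟨Sq x, LinearMap.mem_range_self _ x⟩ = T x := by
    intro x
    simp only [hgdef, LinearMap.comp_apply, LinearEquiv.coe_coe]
    rw [LinearMap.quotKerEquivRange_symm_apply_image]
    exact Submodule.liftQ_apply _ T x
  have hgn : ∀ y : LinearMap.range Sq, ‖g y‖ = ‖y‖ := by
    rintro ⟨y, hy⟩
    obtain ⟨x, rfl⟩ := hy
    rw [hg x]
    have : ‖(⟨Sq x, LinearMap.mem_range_self _ x⟩ : LinearMap.range Sq)‖ = ‖Sq x‖ := rfl
    rw [this, hnorm]
  set L : LinearMap.range Sq →ₗᵢ[ℝ] EuclideanSpace ℝ (Fin k) := ⟨g, hgn⟩ with hL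
  set Oiso := L.extend with hOiso
  set O : Matrix (Fin k) (Fin k) ℝ := toEuclideanLin.symm Oiso.toLinearMap with hOdef
  have hO : toEuclideanLin O = Oiso.toLinearMap := toEuclideanLin.apply_symm_apply _
  have hOapp : ∀ x, toEuclideanLin O x = Oiso x := fun x => by rw [hO]; rfl
  have hMOS : M = O * S := by
    apply toEuclideanLin.injective
    apply LinearMap.ext
    intro x
    rw [tel_mul, hOapp]
    have h2 : Oiso (Sq x) = L ⟨Sq x, LinearMap.mem_range_self _ x⟩ :=
      L.extend_apply ⟨Sq x, LinearMap.mem_range_self _ x⟩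
    rw [show toEuclideanLin S x = Sq x from rfl, h2]
    exact (hg x).symm
  refine ⟨O, S, ?_, hSps, hSS, hMOS⟩
  apply toEuclideanLin.injective
  apply LinearMap.ext
  intro x
  apply ext_inner_left ℝ
  intro v
  rw [tel_mul, show Oᵀ = Oᴴ from (conjTranspose_eq_transpose_of_trivial O).symm,
    Matrix.toEuclideanLin_conjTranspose_eq_adjoint, LinearMap.adjoint_inner_right,
    hOapp, hOapp]
  rw [Oiso.inner_map_map]
  have : toEuclideanLin (1 : Matrix (Fin k) (Fin k) ℝ) x = x := by
    simp [Matrix.toEuclideanLin_apply]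
  rw [this]

end SpecAux

open SpecAux in
/-- Alignment of orthonormal frames: if `U, Ũ ∈ ℝ^{n×k}` have orthonormal columns,
there is an orthogonal `O ∈ ℝ^{k×k}` with `‖Ũ - U O‖ ≤ 2 ‖(I - U Uᵀ) Ũ‖`. -/
theorem orthonormal_basis_alignment {n k : ℕ}
    (U Ut : Matrix (Fin n) (Fin k) ℝ)
    (hU : Uᵀ * U = 1) (hUt : Utᵀ * Ut = 1) :
    ∃ O : Matrix (Fin k) (Fin k) ℝ, Oᵀ * O = 1 ∧
      specNorm (Ut - U * O) ≤ 2 * specNorm ((1 - U * Uᵀ) * Ut) := by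
  set M : Matrix (Fin k) (Fin k) ℝ := Uᵀ * Ut with hM
  set N : Matrix (Fin n) (Fin k) ℝ := (1 - U * Uᵀ) * Ut with hN
  obtain ⟨O, S, hOO, hSps, hSS, hMOS⟩ := polar M
  refine ⟨O, hOO, ?_⟩
  have hPP : (U * Uᵀ) * (U * Uᵀ) = U * Uᵀ := by
    rw [Matrix.mul_assoc, ← Matrix.mul_assoc Uᵀ U Uᵀ, hU, Matrix.one_mul]
  -- Nᵀ N = 1 - Mᵀ M
  have hNN : Nᵀ * N = 1 - Mᵀ * M := by
    have hNt : Nᵀ = Utᵀ * (1 - U * Uᵀ) := by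
      rw [hN, transpose_mul, transpose_sub, transpose_one, transpose_mul, transpose_transpose]
    rw [hNt, hN, hM]
    rw [show (Utᵀ * (1 - U * Uᵀ)) * ((1 - U * Uᵀ) * Ut)
        = Utᵀ * (((1 - U * Uᵀ) * (1 - U * Uᵀ)) * Ut) by simp only [Matrix.mul_assoc]]
    rw [show (1 - U * Uᵀ) * (1 - U * Uᵀ) = 1 - U * Uᵀ from by
      calc (1 - U * Uᵀ) * (1 - U * Uᵀ)
          = 1 - U * Uᵀ - U * Uᵀ + U * Uᵀ * (U * Uᵀ) := by noncomm_ring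
        _ = 1 - U * Uᵀ := by rw [hPP]; abel]
    rw [Matrix.sub_mul, Matrix.one_mul, Matrix.mul_sub, hUt, transpose_mul, transpose_transpose]
    simp only [Matrix.mul_assoc]
  have psdNtN : (Nᵀ * N).PosSemidef := by
    have := Matrix.posSemidef_conjTranspose_mul_self N
    rwa [conjTranspose_eq_transpose_of_trivial] at this
  have psdMtM : (Mᵀ * M).PosSemidef := by
    have := Matrix.posSemidef_conjTranspose_mul_self M
    rwa [conjTranspose_eq_transpose_of_trivial] at this
  have h1SS : (1 - S * S).PosSemidef := by
    rw [hSS, ← hNN]; exact psdNtN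
  have h1S : (1 - S).PosSemidef := psd_one_sub hSps h1SS
  have hsub : ((1 - S * S) - (1 - S)).PosSemidef := by
    rw [show (1 - S * S) - (1 - S) = S - S * S by abel]
    exact psd_sub_sq hSps h1S
  -- splitting
  have hsplit : Ut - U * O = N + U * (M - O) := by
    rw [hN, hM]
    rw [Matrix.mul_sub, Matrix.sub_mul, Matrix.one_mul, ← Matrix.mul_assoc]
    abel
  -- norms
  have hstep1 : ‖Ut - U * O‖ ≤ ‖N‖ + ‖M - O‖ := by
    rw [hsplit]
    calc ‖N + U * (M - O)‖ ≤ ‖N‖ + ‖U * (M - O)‖ := norm_add_le _ _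
      _ ≤ ‖N‖ + ‖M - O‖ := by
        have := norm_iso_mul_le hU (M - O)
        linarith
  have hstep2 : ‖M - O‖ ≤ ‖(1 : Matrix (Fin k) (Fin k) ℝ) - S‖ := by
    have hMO : M - O = -(O * (1 - S)) := by
      rw [hMOS, Matrix.mul_sub, Matrix.mul_one, neg_sub]
    rw [hMO, norm_neg]
    exact norm_iso_mul_le hOO _
  have hstep3 : ‖(1 : Matrix (Fin k) (Fin k) ℝ) - S‖ ≤ ‖(1 : Matrix (Fin k) (Fin k) ℝ) - S * S‖ :=
    norm_le_of_psd h1S h1SS hsub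
  have hstep4 : ‖(1 : Matrix (Fin k) (Fin k) ℝ) - S * S‖ = ‖N‖ * ‖N‖ := by
    rw [hSS, ← hNN, show Nᵀ = Nᴴ from (conjTranspose_eq_transpose_of_trivial N).symm]
    exact Matrix.l2_opNorm_conjTranspose_mul_self N
  have heps1 : ‖N‖ * ‖N‖ ≤ 1 := by
    have h1 : ‖Nᵀ * N‖ ≤ ‖(1 : Matrix (Fin k) (Fin k) ℝ)‖ := by
      apply norm_le_of_psd psdNtN
      · refine Matrix.PosSemidef.of_dotProduct_mulVec_nonneg ?_ ?_
        · rw [Matrix.IsHermitian, conjTranspose_one]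
        · intro x
          simp only [star_trivial, one_mulVec]
          have : dotProduct x x = ‖(WithLp.equiv 2 (Fin k → ℝ)).symm x‖ ^ 2 := by
            rw [← dot_self_eq, Equiv.apply_symm_apply]
          rw [this]; positivity
      · rw [hNN, show (1 : Matrix (Fin k) (Fin k) ℝ) - (1 - Mᵀ * M) = Mᵀ * M by abel]
        exact psdMtM
    have h2 : ‖Nᵀ * N‖ = ‖N‖ * ‖N‖ := by
      rw [show Nᵀ = Nᴴ from (conjTranspose_eq_transpose_of_trivial N).symm]
      exact Matrix.l2_opNorm_conjTranspose_mul_self N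
    calc ‖N‖ * ‖N‖ = ‖Nᵀ * N‖ := h2.symm
      _ ≤ ‖(1 : Matrix (Fin k) (Fin k) ℝ)‖ := h1
      _ ≤ 1 := norm_one_le
  have hfinal : ‖Ut - U * O‖ ≤ ‖N‖ + ‖N‖ * ‖N‖ := by
    calc ‖Ut - U * O‖ ≤ ‖N‖ + ‖M - O‖ := hstep1
      _ ≤ ‖N‖ + ‖N‖ * ‖N‖ := by
        have := hstep2.trans (hstep3.trans_eq hstep4)
        linarith
  rw [specNorm_eq, specNorm_eq]
  nlinarith [norm_nonneg N, heps1, hfinal]
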